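/- Let γ ∈ (0,1) and let π̂ : ℝⁿ → ℝᵐ be Lipschitz with constant ℓ_{π̂}. Fix δ ∈ ℝⁿ with ‖δ‖ ≤ ζ and define π̂_δ(x) = π̂(x + δ). Assume the closed-loop maps f_{π̂} and f_{π̂_δ} map B_r(0) into itself, that V^{π̂} and V^{π̂_δ} are well defined and bounded on B_r(0), that c is Lipschitz in the control with constant ℓ_c^u, that f is Lipschitz in the control with constant ℓ_f^u, and that V^{π̂} is Lipschitz on B_r(0) with constant ℓ_{V^{π̂}}. Then for every x ∈ B_r(0) the one-step robustness decomposition holds: V^{π̂_δ}(x) − V^{π̂}(x) ≤ ℓ_c^u ℓ_{π̂} ζ + γ · sup_{z ∈ B_r(0)} ( V^{π̂_δ}(z) − V^{π̂}(z) ) + γ ℓ_{V^{π̂}} ℓ_f^u ℓ_{π̂} ζ. -/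
import Mathlib


/-!
STATEMENT 14: One-step robustness decomposition. For an `ℓ_π̂`-Lipschitz learned policy
`π̂` and a fixed perturbation `δ` with `‖δ‖ ≤ ζ`, writing `π̂_δ(x) = π̂(x + δ)`, under
invariance of `B_r(0)` for both closed-loop maps, well-definedness/boundedness of the
value functions on the ball, Lipschitz continuity of `c` and `f` in the control, and
Lipschitz continuity of `V^π̂` on the ball, for every `x ∈ B_r(0)`:
`V^{π̂_δ}(x) − V^{π̂}(x) ≤ ℓ_c^u ℓ_π̂ ζ + γ sup_{B_r} (V^{π̂_δ} − V^{π̂}) + γ ℓ_{V^π̂} ℓ_f^u ℓ_π̂ ζ`.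
-/

open Metric

/-- The closed-loop map `f_π(x) = f(x, π(x))`. -/
def cloop {E U : Type*} (f : E → U → E) (π : E → U) : E → E := fun x => f x (π x)

/-- The discounted value function `V^π(x) = ∑_t γ^t c(f_π^t(x), π(f_π^t(x)))`. -/
noncomputable def Vval {E U : Type*} (f : E → U → E) (c : E → U → ℝ) (γ : ℝ)
    (π : E → U) (x : E) : ℝ :=
  ∑' t : ℕ, γ ^ t * c ((cloop f π)^[t] x) (π ((cloop f π)^[t] x))


lemma bellman {E U : Type*} (f : E → U → E) (c : E → U → ℝ) (γ : ℝ) (π : E → U) (x : E)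
    (h : Summable fun t : ℕ => γ ^ t * c ((cloop f π)^[t] x) (π ((cloop f π)^[t] x))) :
    Vval f c γ π x = c x (π x) + γ * Vval f c γ π (cloop f π x) := by
  unfold Vval
  rw [Summable.tsum_eq_zero_add h]
  simp only [pow_zero, one_mul, Function.iterate_zero_apply, Function.iterate_succ_apply,
    pow_succ']
  rw [← tsum_mul_left]
  congr 1
  exact tsum_congr fun b => by ring

set_option maxHeartbeats 1000000 in
theorem one_step_robustness_decomposition {n m : ℕ}
    (f : EuclideanSpace ℝ (Fin n) → EuclideanSpace ℝ (Fin m) → EuclideanSpace ℝ (Fin n))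
    (c : EuclideanSpace ℝ (Fin n) → EuclideanSpace ℝ (Fin m) → ℝ)
    (hc_nonneg : ∀ x u, 0 ≤ c x u)
    (γ : ℝ) (hγ : γ ∈ Set.Ioo (0 : ℝ) 1)
    (r ζ : ℝ) (hζ : 0 ≤ ζ)
    (πhat : EuclideanSpace ℝ (Fin n) → EuclideanSpace ℝ (Fin m))
    (ℓπ : ℝ) (hℓπ : 0 ≤ ℓπ)
    (hπhat_lip : ∀ x y, ‖πhat x - πhat y‖ ≤ ℓπ * ‖x - y‖)
    (δ : EuclideanSpace ℝ (Fin n)) (hδ : ‖δ‖ ≤ ζ)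
    (hinv : ∀ x ∈ closedBall (0 : EuclideanSpace ℝ (Fin n)) r,
      cloop f πhat x ∈ closedBall (0 : EuclideanSpace ℝ (Fin n)) r)
    (hinv_pert : ∀ x ∈ closedBall (0 : EuclideanSpace ℝ (Fin n)) r,
      cloop f (fun z => πhat (z + δ)) x ∈ closedBall (0 : EuclideanSpace ℝ (Fin n)) r)
    (hsum : ∀ x ∈ closedBall (0 : EuclideanSpace ℝ (Fin n)) r,
      Summable fun t : ℕ => γ ^ t * c ((cloop f πhat)^[t] x) (πhat ((cloop f πhat)^[t] x)))
    (hsum_pert : ∀ x ∈ closedBall (0 : EuclideanSpace ℝ (Fin n)) r,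
      Summable fun t : ℕ => γ ^ t *
        c ((cloop f (fun z => πhat (z + δ)))^[t] x)
          (πhat ((cloop f (fun z => πhat (z + δ)))^[t] x + δ)))
    (hbdd : ∃ M : ℝ, ∀ x ∈ closedBall (0 : EuclideanSpace ℝ (Fin n)) r,
      |Vval f c γ πhat x| ≤ M)
    (hbdd_pert : ∃ M : ℝ, ∀ x ∈ closedBall (0 : EuclideanSpace ℝ (Fin n)) r,
      |Vval f c γ (fun z => πhat (z + δ)) x| ≤ M)
    (ℓcu ℓfu ℓV : ℝ) (hℓcu : 0 ≤ ℓcu) (hℓfu : 0 ≤ ℓfu) (hℓV : 0 ≤ ℓV)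
    (hc_lip : ∀ x u₁ u₂, |c x u₁ - c x u₂| ≤ ℓcu * ‖u₁ - u₂‖)
    (hf_lip : ∀ x u₁ u₂, ‖f x u₁ - f x u₂‖ ≤ ℓfu * ‖u₁ - u₂‖)
    (hV_lip : ∀ x ∈ closedBall (0 : EuclideanSpace ℝ (Fin n)) r,
      ∀ y ∈ closedBall (0 : EuclideanSpace ℝ (Fin n)) r,
        |Vval f c γ πhat x - Vval f c γ πhat y| ≤ ℓV * ‖x - y‖) :
    ∀ x ∈ closedBall (0 : EuclideanSpace ℝ (Fin n)) r,
      Vval f c γ (fun z => πhat (z + δ)) x - Vval f c γ πhat x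
        ≤ ℓcu * ℓπ * ζ
          + γ * sSup ((fun z => Vval f c γ (fun w => πhat (w + δ)) z - Vval f c γ πhat z) ''
              closedBall (0 : EuclideanSpace ℝ (Fin n)) r)
          + γ * ℓV * ℓfu * ℓπ * ζ := by
  intro x hx
  set πd := fun z : EuclideanSpace ℝ (Fin n) => πhat (z + δ) with hπd
  set g := cloop f πd with hg
  set F := cloop f πhat with hF
  have hgx : g x ∈ closedBall (0 : EuclideanSpace ℝ (Fin n)) r := hinv_pert x hx
  have hFx : F x ∈ closedBall (0 : EuclideanSpace ℝ (Fin n)) r := hinv x hx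
  have hb1 : Vval f c γ πd x = c x (πd x) + γ * Vval f c γ πd (g x) :=
    bellman f c γ πd x (hsum_pert x hx)
  have hb2 : Vval f c γ πhat x = c x (πhat x) + γ * Vval f c γ πhat (F x) :=
    bellman f c γ πhat x (hsum x hx)
  -- bound the sup term
  obtain ⟨M, hM⟩ := hbdd
  obtain ⟨M', hM'⟩ := hbdd_pert
  have hbdd_above : BddAbove ((fun z => Vval f c γ πd z - Vval f c γ πhat z) ''
      closedBall (0 : EuclideanSpace ℝ (Fin n)) r) := by
    refine ⟨M' + M, ?_⟩
    rintro _ ⟨z, hz, rfl⟩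
    simp only
    have := hM z hz
    have := hM' z hz
    have h1 : Vval f c γ πd z ≤ M' := (abs_le.mp (hM' z hz)).2
    have h2 : -M ≤ Vval f c γ πhat z := (abs_le.mp (hM z hz)).1
    linarith
  have hsup : Vval f c γ πd (g x) - Vval f c γ πhat (g x)
      ≤ sSup ((fun z => Vval f c γ πd z - Vval f c γ πhat z) ''
          closedBall (0 : EuclideanSpace ℝ (Fin n)) r) :=
    le_csSup hbdd_above ⟨g x, hgx, rfl⟩
  -- term 1 : cost difference
  have hπdiff : ‖πhat (x + δ) - πhat x‖ ≤ ℓπ * ζ := by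
    have := hπhat_lip (x + δ) x
    have hnorm : x + δ - x = δ := by abel
    rw [hnorm] at this
    calc ‖πhat (x + δ) - πhat x‖ ≤ ℓπ * ‖δ‖ := this
      _ ≤ ℓπ * ζ := by nlinarith
  have ht1 : c x (πd x) - c x (πhat x) ≤ ℓcu * ℓπ * ζ := by
    have := (abs_le.mp (hc_lip x (πd x) (πhat x))).2
    have h2 : ℓcu * ‖πd x - πhat x‖ ≤ ℓcu * (ℓπ * ζ) := by
      have : ‖πd x - πhat x‖ ≤ ℓπ * ζ := hπdiff
      nlinarith
    linarith [this, h2]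
  -- term 3 : value shift
  have hstate : ‖g x - F x‖ ≤ ℓfu * (ℓπ * ζ) := by
    have h1 : ‖f x (πd x) - f x (πhat x)‖ ≤ ℓfu * ‖πd x - πhat x‖ := hf_lip x _ _
    have h2 : ‖πd x - πhat x‖ ≤ ℓπ * ζ := hπdiff
    calc ‖g x - F x‖ = ‖f x (πd x) - f x (πhat x)‖ := rfl
      _ ≤ ℓfu * ‖πd x - πhat x‖ := h1
      _ ≤ ℓfu * (ℓπ * ζ) := by nlinarith
  have ht3 : Vval f c γ πhat (g x) - Vval f c γ πhat (F x) ≤ ℓV * ℓfu * ℓπ * ζ := by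
    have := (abs_le.mp (hV_lip (g x) hgx (F x) hFx)).2
    have h2 : ℓV * ‖g x - F x‖ ≤ ℓV * (ℓfu * (ℓπ * ζ)) := by nlinarith [hstate]
    nlinarith
  have hγ0 : 0 < γ := hγ.1
  nlinarith [hsup, ht1, ht3, mul_le_mul_of_nonneg_left hsup hγ0.le,
    mul_le_mul_of_nonneg_left ht3 hγ0.le]
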